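/- Let ρ be a state on ℂ^{d_A}⊗ℂ^{d_B}⊗ℂ^{d_C} that is not a PPT mixture. Then there exists a fully decomposable witness W, i.e., a Hermitian matrix W such that for each of the three bipartitions M ∈ {A, B, C} there exist positive semidefinite P_M, Q_M with W = P_M + Q_M^{T_M}, and such that tr(Wρ) < 0. -/

import Mathlib

open Matrix Finset ComplexOrder

/-- Operators on `ℂ^{d 0} ⊗ ℂ^{d 1} ⊗ ℂ^{d 2}` (three parties A, B, C). -/
abbrev MatD {n : ℕ} (d : Fin n → ℕ) :=
  Matrix ((a : Fin n) → Fin (d a)) ((a : Fin n) → Fin (d a)) ℂ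

/-- The partial transpose with respect to the subset `M` of tensor factors. -/
def ptrans {n : ℕ} (d : Fin n → ℕ) (M : Finset (Fin n)) (X : MatD d) : MatD d :=
  fun i j => X (fun a => if a ∈ M then j a else i a) (fun a => if a ∈ M then i a else j a)

/-- A state is a positive semidefinite matrix of trace 1. -/
def IsState {n : ℕ} {d : Fin n → ℕ} (ρ : MatD d) : Prop :=
  ρ.PosSemidef ∧ ρ.trace = 1

/-- A tripartite PPT mixture: `ρ = p₁ ρ_{A|BC} + p₂ ρ_{B|AC} + p₃ ρ_{C|AB}` where each
`ρ_{M|M̄}` is a state whose partial transpose w.r.t. the single party `M` is PSD. -/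
def IsPPTMixture3 (d : Fin 3 → ℕ) (ρ : MatD d) : Prop :=
  ∃ (p : Fin 3 → ℝ) (σ : Fin 3 → MatD d),
    (∀ i, 0 ≤ p i) ∧ (∑ i, p i = 1) ∧
    (∀ i, IsState (σ i) ∧ (ptrans d {i} (σ i)).PosSemidef) ∧
    ρ = ∑ i, (p i : ℂ) • σ i

set_option linter.unusedSectionVars false

section Basic
variable {n : ℕ} {d : Fin n → ℕ} {M : Finset (Fin n)}

/-- mixed index -/
def pmix (M : Finset (Fin n)) (i j : (a : Fin n) → Fin (d a)) : (a : Fin n) → Fin (d a) :=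
  fun a => if a ∈ M then i a else j a

lemma pmix_pmix (i j : (a : Fin n) → Fin (d a)) :
    pmix M (pmix M i j) (pmix M j i) = i := by
  funext a; unfold pmix; by_cases ha : a ∈ M <;> simp [ha]

lemma pmix_self (i : (a : Fin n) → Fin (d a)) : pmix M i i = i := by
  funext a; unfold pmix; by_cases ha : a ∈ M <;> simp [ha]

lemma ptrans_apply (X : MatD d) (i j : (a : Fin n) → Fin (d a)) :
    ptrans d M X i j = X (pmix M j i) (pmix M i j) := rfl

lemma ptrans_add (X Y : MatD d) : ptrans d M (X + Y) = ptrans d M X + ptrans d M Y := rfl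

lemma ptrans_smul (c : ℂ) (X : MatD d) : ptrans d M (c • X) = c • ptrans d M X := rfl

lemma ptrans_trace (X : MatD d) : (ptrans d M X).trace = X.trace := by
  unfold Matrix.trace Matrix.diag
  exact Finset.sum_congr rfl fun i _ => by rw [ptrans_apply, pmix_self]

lemma ptrans_conjTranspose (X : MatD d) : (ptrans d M X)ᴴ = ptrans d M Xᴴ := rfl

lemma ptrans_isHermitian {X : MatD d} (hX : X.IsHermitian) : (ptrans d M X).IsHermitian := by
  unfold Matrix.IsHermitian
  rw [ptrans_conjTranspose, hX]

lemma ptrans_one : ptrans d M (1 : MatD d) = 1 := by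
  ext i j
  rw [ptrans_apply]
  by_cases h : i = j
  · subst h; rw [pmix_self]
  · rw [Matrix.one_apply_ne h, Matrix.one_apply_ne]
    intro hc
    apply h
    funext a
    have := congrFun hc a
    unfold pmix at this
    by_cases ha : a ∈ M
    · simp only [ha, if_true] at this; exact this.symm
    · simp only [ha, if_false] at this; exact this

lemma trace_mul_ptrans (A B : MatD d) :
    (A * ptrans d M B).trace = (ptrans d M A * B).trace := by
  have key : ∀ (X Y : MatD d), (X * Y).trace =
      ∑ p : ((a : Fin n) → Fin (d a)) × ((a : Fin n) → Fin (d a)), X p.1 p.2 * Y p.2 p.1 := by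
    intro X Y
    rw [Fintype.sum_prod_type, Matrix.trace]
    exact Finset.sum_congr rfl fun i _ => by simp [Matrix.mul_apply, Matrix.diag]
  rw [key, key]
  refine Fintype.sum_equiv (Function.Involutive.toPerm
      (fun p => (pmix M p.2 p.1, pmix M p.1 p.2))
      (fun p => Prod.ext (pmix_pmix p.1 p.2) (pmix_pmix p.2 p.1))) _ _ fun p => ?_
  simp only [Function.Involutive.coe_toPerm, ptrans_apply]
  simp only [Function.Involutive.toPerm, Equiv.coe_fn_mk, pmix_pmix]

end Basic

section PSD
variable {m : Type*} [Fintype m] [DecidableEq m]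

lemma herm_trace_real {X : Matrix m m ℂ} (hX : X.IsHermitian) :
    X.trace = ((X.trace).re : ℂ) := by
  have h := Matrix.trace_conjTranspose X
  rw [hX] at h
  exact (Complex.conj_eq_iff_re.mp h.symm).symm

lemma herm_trace_mul_real {X Y : Matrix m m ℂ} (hX : X.IsHermitian) (hY : Y.IsHermitian) :
    (X * Y).trace = (((X * Y).trace).re : ℂ) := by
  have h : (X * Y)ᴴ.trace = star ((X * Y).trace) := Matrix.trace_conjTranspose _
  rw [Matrix.conjTranspose_mul, hX, hY, Matrix.trace_mul_comm] at h
  exact (Complex.conj_eq_iff_re.mp h.symm).symm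

lemma trace_mul_vecMulVec (X : Matrix m m ℂ) (v : m → ℂ) :
    (X * Matrix.vecMulVec v (star v)).trace = star v ⬝ᵥ X.mulVec v := by
  simp only [Matrix.trace, Matrix.diag, Matrix.mul_apply, Matrix.vecMulVec_apply,
    dotProduct, Matrix.mulVec, Pi.star_apply]
  refine Finset.sum_congr rfl fun i _ => ?_
  rw [Finset.mul_sum]
  refine Finset.sum_congr rfl fun j _ => by ring

lemma posSemidef_vecMulVec (v : m → ℂ) : (Matrix.vecMulVec v (star v)).PosSemidef := by
  rw [show Matrix.vecMulVec v (star v) = Matrix.replicateCol Unit v * (Matrix.replicateCol Unit v)ᴴ by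
    rw [Matrix.conjTranspose_replicateCol, Matrix.vecMulVec_eq Unit]]
  exact Matrix.posSemidef_self_mul_conjTranspose _

lemma posSemidef_of_pairing {X : Matrix m m ℂ} (hX : X.IsHermitian)
    (h : ∀ P : Matrix m m ℂ, P.PosSemidef → 0 ≤ ((X * P).trace).re) : X.PosSemidef := by
  refine Matrix.PosSemidef.of_dotProduct_mulVec_nonneg hX fun v => ?_
  have h1 : star v ⬝ᵥ X.mulVec v = (X * Matrix.vecMulVec v (star v)).trace :=
    (trace_mul_vecMulVec X v).symm
  have h2 := herm_trace_mul_real hX (posSemidef_vecMulVec v).isHermitian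
  rw [h1, h2]
  have := h _ (posSemidef_vecMulVec v)
  exact_mod_cast this

lemma psd_diag {P : Matrix m m ℂ} (hP : P.PosSemidef) (i : m) : 0 ≤ P i i := by
  have := hP.dotProduct_mulVec_nonneg (Pi.single i 1)
  simpa [Matrix.mulVec_single, dotProduct, Pi.single_apply] using this

lemma psd_trace_re_nonneg {P : Matrix m m ℂ} (hP : P.PosSemidef) : 0 ≤ (P.trace).re := by
  rw [Matrix.trace]
  simp only [Complex.re_sum]
  exact Finset.sum_nonneg fun i _ => (Complex.le_def.mp (psd_diag hP i)).1

lemma psd_diag_le_trace {P : Matrix m m ℂ} (hP : P.PosSemidef) (i : m) :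
    (P i i).re ≤ (P.trace).re := by
  rw [Matrix.trace]
  simp only [Complex.re_sum]
  exact Finset.single_le_sum (f := fun k => (P k k).re)
    (fun k _ => (Complex.le_def.mp (psd_diag hP k)).1) (Finset.mem_univ i)

lemma psd_entry_le_trace {P : Matrix m m ℂ} (hP : P.PosSemidef) (i j : m) :
    ‖P i j‖ ≤ (P.trace).re := by
  by_cases hij : i = j
  · subst hij
    have h := psd_diag hP i
    have him : (P i i).im = 0 := (Complex.le_def.mp h).2.symm
    have hre : 0 ≤ (P i i).re := (Complex.le_def.mp h).1
    calc ‖P i i‖ = (P i i).re := by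
          rw [Complex.norm_def, Complex.normSq_apply, him]
          simp [Real.sqrt_mul_self hre]
      _ ≤ (P.trace).re := psd_diag_le_trace hP i
  · set z := P i j with hz
    by_cases hz0 : z = 0
    · rw [hz0]; simpa using psd_trace_re_nonneg hP
    · set c : ℂ := -(starRingEnd ℂ z) / ‖z‖ with hc
      set v : m → ℂ := Pi.single i 1 + Pi.single j c with hv
      have hstar : star v = Pi.single i 1 + Pi.single j (star c) := by
        rw [hv, star_add]
        congr 1
        · funext k; by_cases hk : k = i <;> simp [Pi.single_apply, hk, apply_ite (star (R := ℂ))]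
        · funext k; by_cases hk : k = j <;> simp [Pi.single_apply, hk, apply_ite (star (R := ℂ))]
      have hmv : P *ᵥ v = (fun k => P k i) + (fun k => P k j * c) := by
        rw [hv, Matrix.mulVec_add, Matrix.mulVec_single, Matrix.mulVec_single]
        funext k
        simp [op_smul_eq_mul, mul_comm]
      have hq : star v ⬝ᵥ P *ᵥ v
          = (P i i + P i j * c) + (star c * P j i + star c * (P j j * c)) := by
        rw [hstar, hmv]
        rw [add_dotProduct, dotProduct_add, dotProduct_add,
          single_dotProduct, single_dotProduct,
          single_dotProduct, single_dotProduct]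
        simp only [Pi.add_apply, one_mul]
      have habs0 : (‖z‖ : ℂ) ≠ 0 := by simpa using hz0
      have hcz : P i j * c = -(‖z‖ : ℂ) := by
        calc P i j * c = -(z * starRingEnd ℂ z) / (‖z‖ : ℂ) := by
              rw [hc, ← hz]; ring
          _ = -(((‖z‖ : ℝ) : ℂ)^2) / (‖z‖ : ℂ) := by
              rw [Complex.mul_conj, Complex.normSq_eq_norm_sq]; push_cast; ring_nf
          _ = -(‖z‖ : ℂ) := by
              rw [pow_two, neg_div, mul_div_assoc, div_self habs0, mul_one]
      have hji : P j i = starRingEnd ℂ z := by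
        rw [hz]
        exact (hP.isHermitian.apply j i).symm
      have hcstar : star c = -z / (‖z‖ : ℂ) := by
        rw [hc, Complex.star_def, map_div₀, map_neg, Complex.conj_conj, Complex.conj_ofReal]
      have hc2 : star c * P j i = -(‖z‖ : ℂ) := by
        calc star c * P j i = -(z * starRingEnd ℂ z) / (‖z‖ : ℂ) := by
              rw [hcstar, hji]; ring
          _ = -(((‖z‖ : ℝ) : ℂ)^2) / (‖z‖ : ℂ) := by
              rw [Complex.mul_conj, Complex.normSq_eq_norm_sq]; push_cast; ring_nf
          _ = -(‖z‖ : ℂ) := by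
              rw [pow_two, neg_div, mul_div_assoc, div_self habs0, mul_one]
      have hc1 : ‖c‖ = 1 := by
        rw [hc]
        rw [norm_div]
        simp [Complex.norm_conj, hz0]
      have hcc : star c * (P j j * c) = P j j := by
        calc star c * (P j j * c) = P j j * (c * starRingEnd ℂ c) := by
              rw [Complex.star_def]; ring
          _ = P j j := by
              rw [Complex.mul_conj, Complex.normSq_eq_norm_sq, hc1]; norm_num
      have hpos := hP.dotProduct_mulVec_nonneg v
      rw [hq, hcz, hc2, hcc] at hpos
      have hre := (Complex.le_def.mp hpos).1
      simp only [Complex.add_re, Complex.neg_re, Complex.ofReal_re, Complex.zero_re] at hre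
      have h2 : 2 * ‖z‖ ≤ (P i i).re + (P j j).re := by linarith
      have hii := psd_diag_le_trace hP i
      have hjj := psd_diag_le_trace hP j
      have htr : (P i i).re + (P j j).re ≤ 2 * (P.trace).re := by linarith
      have habs : 0 ≤ ‖z‖ := norm_nonneg z
      linarith

lemma psd_smul {P : Matrix m m ℂ} (hP : P.PosSemidef) {c : ℝ} (hc : 0 ≤ c) :
    ((c : ℂ) • P).PosSemidef := by
  refine Matrix.PosSemidef.of_dotProduct_mulVec_nonneg ?_ fun v => ?_
  · unfold Matrix.IsHermitian
    rw [Matrix.conjTranspose_smul, hP.isHermitian]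
    norm_num
  · rw [Matrix.smul_mulVec, dotProduct_smul, smul_eq_mul]
    have h0 : (0:ℂ) ≤ (c : ℂ) := by exact_mod_cast Complex.zero_le_real.mpr hc
    exact mul_nonneg h0 (hP.dotProduct_mulVec_nonneg v)

lemma psd_eq_zero_of_trace {P : Matrix m m ℂ} (hP : P.PosSemidef) (h : (P.trace).re = 0) :
    P = 0 := by
  ext i j
  have := psd_entry_le_trace hP i j
  rw [h] at this
  have h0 : ‖P i j‖ = 0 := le_antisymm this (norm_nonneg _)
  simpa using norm_eq_zero.mp h0

end PSD

section Top
variable {m : Type*} [Fintype m] [DecidableEq m]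

instance : IsTopologicalAddGroup (Matrix m m ℂ) :=
  inferInstanceAs (IsTopologicalAddGroup (m → m → ℂ))

instance : LocallyConvexSpace ℝ (Matrix m m ℂ) :=
  inferInstanceAs (LocallyConvexSpace ℝ (m → m → ℂ))

instance : FirstCountableTopology (Matrix m m ℂ) :=
  inferInstanceAs (FirstCountableTopology (m → m → ℂ))

lemma continuous_entry (i j : m) : Continuous fun X : Matrix m m ℂ => X i j :=
  (continuous_apply j).comp (continuous_apply (A := fun _ : m => m → ℂ) i)

lemma continuous_mtrace : Continuous fun X : Matrix m m ℂ => X.trace :=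
  continuous_finset_sum _ fun i _ => continuous_entry i i

lemma continuous_quad (v : m → ℂ) :
    Continuous fun X : Matrix m m ℂ => star v ⬝ᵥ X.mulVec v := by
  have : (fun X : Matrix m m ℂ => star v ⬝ᵥ X.mulVec v)
      = fun X => ∑ i, ∑ j, star (v i) * (X i j * v j) := by
    funext X
    simp [dotProduct, Matrix.mulVec, Finset.mul_sum]
  rw [this]
  exact continuous_finset_sum _ fun i _ => continuous_finset_sum _ fun j _ =>
    continuous_const.mul ((continuous_entry i j).mul continuous_const)

lemma isClosed_nonneg_complex : IsClosed {z : ℂ | 0 ≤ z} := by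
  have : {z : ℂ | 0 ≤ z} = Complex.re ⁻¹' (Set.Ici 0) ∩ Complex.im ⁻¹' {0} := by
    ext z
    simp only [Set.mem_setOf_eq, Set.mem_inter_iff, Set.mem_preimage, Set.mem_Ici,
      Set.mem_singleton_iff, Complex.le_def, Complex.zero_re, Complex.zero_im]
    tauto
  rw [this]
  exact (isClosed_Ici.preimage Complex.continuous_re).inter
    ((isClosed_singleton).preimage Complex.continuous_im)

lemma isClosed_psd : IsClosed {X : Matrix m m ℂ | X.PosSemidef} := by
  have : {X : Matrix m m ℂ | X.PosSemidef}
      = {X : Matrix m m ℂ | Xᴴ = X} ∩ ⋂ v : m → ℂ, {X | 0 ≤ star v ⬝ᵥ X.mulVec v} := by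
    ext X
    simp only [Set.mem_setOf_eq, Set.mem_inter_iff, Set.mem_iInter]
    exact Matrix.posSemidef_iff_dotProduct_mulVec
  rw [this]
  refine (isClosed_eq continuous_id.matrix_conjTranspose continuous_id).inter ?_
  exact isClosed_iInter fun v => isClosed_nonneg_complex.preimage (continuous_quad v)

lemma isCompact_box (c : ℝ) :
    IsCompact {X : Matrix m m ℂ | ∀ i j, ‖X i j‖ ≤ c} := by
  have h : IsCompact ((Set.univ.pi fun _ : m => Set.univ.pi fun _ : m =>
      Metric.closedBall (0:ℂ) c) : Set (Matrix m m ℂ)) :=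
    isCompact_univ_pi fun _ => isCompact_univ_pi fun _ => isCompact_closedBall 0 c
  have hset : {X : Matrix m m ℂ | ∀ i j, ‖X i j‖ ≤ c}
      = (Set.univ.pi fun _ : m => Set.univ.pi fun _ : m => Metric.closedBall (0:ℂ) c) := by
    ext X
    constructor
    · exact fun hX i _ j _ => by
        simpa [Metric.mem_closedBall, Complex.dist_eq] using hX i j
    · exact fun hX i j => by
        simpa [Metric.mem_closedBall, Complex.dist_eq] using
          hX i (Set.mem_univ i) j (Set.mem_univ j)
  rw [hset]
  exact h

end Top

section Repr
variable {m : Type*} [Fintype m] [DecidableEq m]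

lemma exists_repr (f : Matrix m m ℂ →L[ℝ] ℝ) :
    ∃ Y : Matrix m m ℂ, Y.IsHermitian ∧
      ∀ X : Matrix m m ℂ, X.IsHermitian → f X = ((Y * X).trace).re := by
  set Y₀ : Matrix m m ℂ := fun a b =>
    (↑(f (Matrix.single b a 1)) : ℂ) - Complex.I * (↑(f (Complex.I • Matrix.single b a 1)) : ℂ)
    with hY₀
  have h1 : ∀ a b : m, (Y₀ a b).re = f (Matrix.single b a 1) := by
    intro a b; simp [hY₀]
  have h2 : ∀ a b : m, (Y₀ a b).im = -f (Complex.I • Matrix.single b a 1) := by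
    intro a b; simp [hY₀]
  have key : ∀ X : Matrix m m ℂ, ((Y₀ * X).trace).re = f X := by
    intro X
    have lhs : ((Y₀ * X).trace).re
        = ∑ i : m, ∑ j : m, ((X i j).re * f (Matrix.single i j 1)
            + (X i j).im * f (Complex.I • Matrix.single i j 1)) := by
      calc ((Y₀ * X).trace).re = ∑ a : m, ∑ b : m, ((Y₀ a b) * X b a).re := by
            rw [Matrix.trace, Complex.re_sum]
            exact Finset.sum_congr rfl fun a _ => by
              rw [Matrix.diag_apply, Matrix.mul_apply, Complex.re_sum]
        _ = ∑ b : m, ∑ a : m, ((Y₀ a b) * X b a).re := Finset.sum_comm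
        _ = _ := by
            refine Finset.sum_congr rfl fun i _ => Finset.sum_congr rfl fun j _ => ?_
            rw [Complex.mul_re, h1, h2]
            ring
    have rhs : f X = ∑ i : m, ∑ j : m, ((X i j).re * f (Matrix.single i j 1)
            + (X i j).im * f (Complex.I • Matrix.single i j 1)) := by
      conv_lhs => rw [matrix_eq_sum_single X]
      rw [map_sum]
      refine Finset.sum_congr rfl fun i _ => ?_
      rw [map_sum]
      refine Finset.sum_congr rfl fun j _ => ?_
      have hdec : Matrix.single i j (X i j) = (X i j).re • Matrix.single i j (1:ℂ)
          + (X i j).im • (Complex.I • Matrix.single i j (1:ℂ)) := by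
        rw [smul_single, smul_single, smul_single,
          ← Matrix.single_add]
        simp only [Complex.real_smul, smul_eq_mul, mul_one, smul_smul]
        exact congrArg (Matrix.single i j) ((Complex.re_add_im _).symm)
      rw [hdec, map_add, f.map_smul, f.map_smul]
      simp [smul_eq_mul]
    rw [lhs, rhs]
  refine ⟨(2⁻¹ : ℝ) • (Y₀ + Y₀ᴴ), ?_, ?_⟩
  · unfold Matrix.IsHermitian
    rw [Matrix.conjTranspose_smul, Matrix.conjTranspose_add, Matrix.conjTranspose_conjTranspose]
    rw [show star (2⁻¹ : ℝ) = (2⁻¹ : ℝ) from rfl]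
    rw [add_comm]
  · intro X hX
    have htr : (Y₀ᴴ * X).trace = star ((Y₀ * X).trace) := by
      have h1 : (Y₀ᴴ * X).trace = ((Xᴴ * Y₀)ᴴ).trace := by
        rw [Matrix.conjTranspose_mul, Matrix.conjTranspose_conjTranspose]
      rw [h1, Matrix.trace_conjTranspose, Matrix.trace_mul_comm, hX]
    rw [Matrix.smul_mul, Matrix.add_mul, Matrix.trace_smul, Matrix.trace_add, htr]
    rw [← key X]
    have : ∀ z : ℂ, ((2⁻¹ : ℝ) • (z + star z)).re = z.re := by
      intro z
      simp [Complex.smul_re]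
      ring
    rw [this]
end Repr

section Cones
variable {n : ℕ} (d : Fin n → ℕ) (M : Finset (Fin n))

/-- matrices that are PSD with PSD partial transpose -/
def Kcone : Set (MatD d) := {X | X.PosSemidef ∧ (ptrans d M X).PosSemidef}

/-- decomposable-witness cone -/
def Ccone : Set (MatD d) := {W | ∃ P Q : MatD d, P.PosSemidef ∧ Q.PosSemidef ∧
  W = P + ptrans d M Q}

variable {d M}

lemma real_smul_mat (r : ℝ) (X : MatD d) : r • X = (r : ℂ) • X := by
  ext i j
  simp [Matrix.smul_apply, Complex.real_smul]

lemma continuous_ptrans : Continuous (ptrans d M) :=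
  continuous_matrix fun i j => continuous_entry _ _

lemma ptrans_zero : ptrans d M (0 : MatD d) = 0 := rfl

lemma Ccone_convex : Convex ℝ (Ccone d M) := by
  rintro x ⟨P1, Q1, hP1, hQ1, rfl⟩ y ⟨P2, Q2, hP2, hQ2, rfl⟩ a b ha hb hab
  refine ⟨(a:ℂ) • P1 + (b:ℂ) • P2, (a:ℂ) • Q1 + (b:ℂ) • Q2,
    (psd_smul hP1 ha).add (psd_smul hP2 hb), (psd_smul hQ1 ha).add (psd_smul hQ2 hb), ?_⟩
  rw [ptrans_add, ptrans_smul, ptrans_smul, real_smul_mat, real_smul_mat]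
  rw [smul_add, smul_add]
  abel

lemma Ccone_closed : IsClosed (Ccone d M) := by
  apply IsSeqClosed.isClosed
  intro x W hmem hlim
  choose P Q hP hQ hsum using hmem
  have htr : ∀ k, ((P k).trace).re + ((Q k).trace).re = ((x k).trace).re := by
    intro k
    rw [hsum k, Matrix.trace_add, ptrans_trace, Complex.add_re]
  have htend : Filter.Tendsto (fun k => ((x k).trace).re) Filter.atTop (nhds ((W.trace).re)) :=
    (Complex.continuous_re.comp continuous_mtrace).continuousAt.tendsto.comp hlim
  obtain ⟨T, hT⟩ := htend.bddAbove_range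
  have hbound : ∀ k, ((P k).trace).re ≤ T ∧ ((Q k).trace).re ≤ T := by
    intro k
    have h1 := psd_trace_re_nonneg (hP k)
    have h2 := psd_trace_re_nonneg (hQ k)
    have h3 : ((x k).trace).re ≤ T := hT (Set.mem_range_self k)
    constructor <;> [linarith [htr k]; linarith [htr k]]
  have hBc : IsCompact {X : MatD d | X.PosSemidef ∧ (X.trace).re ≤ T} := by
    refine (isCompact_box T).of_isClosed_subset
      (isClosed_psd.inter ((isClosed_le (Complex.continuous_re.comp continuous_mtrace)
        continuous_const))) ?_
    rintro X ⟨hX, hXt⟩ i j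
    exact (psd_entry_le_trace hX i j).trans hXt
  obtain ⟨Pl, hPlmem, φ, hφ, hPl⟩ := hBc.isSeqCompact (x := P)
    (fun k => ⟨hP k, (hbound k).1⟩)
  obtain ⟨Ql, hQlmem, ψ, hψ, hQl⟩ := hBc.isSeqCompact (x := Q ∘ φ)
    (fun k => ⟨hQ _, (hbound _).2⟩)
  have hPl2 : Filter.Tendsto (P ∘ φ ∘ ψ) Filter.atTop (nhds Pl) :=
    hPl.comp hψ.tendsto_atTop
  have hxl : Filter.Tendsto (x ∘ φ ∘ ψ) Filter.atTop (nhds W) :=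
    hlim.comp ((hφ.comp hψ).tendsto_atTop)
  have hxl2 : Filter.Tendsto (x ∘ φ ∘ ψ) Filter.atTop (nhds (Pl + ptrans d M Ql)) := by
    have : (x ∘ φ ∘ ψ) = fun k => (P (φ (ψ k))) + ptrans d M (Q (φ (ψ k))) := by
      funext k
      exact hsum (φ (ψ k))
    rw [this]
    exact (hPl2.add ((continuous_ptrans.continuousAt.tendsto.comp hQl)))
  exact ⟨Pl, Ql, hPlmem.1, hQlmem.1, tendsto_nhds_unique hxl hxl2⟩

lemma mem_Ccone {W : MatD d} (hW : W.IsHermitian)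
    (h : ∀ X ∈ Kcone d M, 0 ≤ ((W * X).trace).re) : W ∈ Ccone d M := by
  by_contra hWC
  obtain ⟨f, u, hfC, hfW⟩ := geometric_hahn_banach_closed_point Ccone_convex Ccone_closed hWC
  obtain ⟨Z, hZ, hZf⟩ := exists_repr f
  have hu0 : 0 < u := by
    have h0 : (0 : MatD d) ∈ Ccone d M :=
      ⟨0, 0, Matrix.PosSemidef.zero, Matrix.PosSemidef.zero, by rw [ptrans_zero, add_zero]⟩
    have := hfC 0 h0
    rwa [map_zero] at this
  -- positivity of -Z against PSD matrices and their partial transposes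
  have hfP : ∀ R : MatD d, R.PosSemidef → f R ≤ 0 := by
    intro R hR
    by_contra hpos
    push_neg at hpos
    set c : ℝ := (u + 1) / f R with hc
    have hcpos : 0 < c := div_pos (by linarith) hpos
    have hmem : ((c : ℂ) • R) ∈ Ccone d M :=
      ⟨(c : ℂ) • R, 0, psd_smul hR hcpos.le, Matrix.PosSemidef.zero, by
        rw [ptrans_zero, add_zero]⟩
    have := hfC _ hmem
    rw [← real_smul_mat, f.map_smul] at this
    have : c * f R < u := this
    rw [hc, div_mul_cancel₀ _ (ne_of_gt hpos)] at this
    linarith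
  have hX : (-Z) ∈ Kcone d M := by
    constructor
    · refine posSemidef_of_pairing hZ.neg ?_
      intro R hR
      have := hfP R hR
      rw [hZf R hR.isHermitian] at this
      rw [Matrix.neg_mul, Matrix.trace_neg, Complex.neg_re]
      linarith
    · refine posSemidef_of_pairing (ptrans_isHermitian hZ.neg) ?_
      intro R hR
      have hfQ : f (ptrans d M R) ≤ 0 := by
        by_contra hpos
        push_neg at hpos
        set c : ℝ := (u + 1) / f (ptrans d M R) with hc
        have hcpos : 0 < c := div_pos (by linarith) hpos
        have hmem : ((c : ℂ) • ptrans d M R) ∈ Ccone d M :=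
          ⟨0, (c : ℂ) • R, Matrix.PosSemidef.zero, psd_smul hR hcpos.le, by
            rw [ptrans_smul, zero_add]⟩
        have := hfC _ hmem
        rw [← real_smul_mat, f.map_smul] at this
        have : c * f (ptrans d M R) < u := this
        rw [hc, div_mul_cancel₀ _ (ne_of_gt hpos)] at this
        linarith
      rw [hZf _ (ptrans_isHermitian hR.isHermitian)] at hfQ
      rw [trace_mul_ptrans] at hfQ
      have hneg : ptrans d M (-Z) = -(ptrans d M Z) := rfl
      rw [hneg, Matrix.neg_mul, Matrix.trace_neg, Complex.neg_re]
      linarith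
  have h1 := h _ hX
  have h2 : f W = ((Z * W).trace).re := hZf W hW
  rw [Matrix.mul_neg, Matrix.trace_neg, Complex.neg_re, Matrix.trace_mul_comm] at h1
  linarith [hfW, hu0]
end Cones

section Main
variable (d : Fin 3 → ℕ)

/-- PPT states w.r.t. the bipartition `i|rest` -/
def Uset (i : Fin 3) : Set (MatD d) :=
  {σ | σ.PosSemidef ∧ σ.trace = 1 ∧ (ptrans d {i} σ).PosSemidef}

/-- the set of PPT mixtures -/
def Sset : Set (MatD d) :=
  (fun pq : (Fin 3 → ℝ) × (Fin 3 → MatD d) => ∑ i, ((pq.1 i : ℂ)) • pq.2 i) ''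
    ((stdSimplex ℝ (Fin 3)) ×ˢ (Set.univ.pi fun i => Uset d i))

variable {d}

lemma maxmix_mem_Uset (hne : Nonempty ((a : Fin 3) → Fin (d a))) (i : Fin 3) :
    ((((Fintype.card ((a : Fin 3) → Fin (d a)) : ℝ)⁻¹ : ℝ) : ℂ) • (1 : MatD d)) ∈ Uset d i := by
  have hcard : (0:ℝ) < (Fintype.card ((a : Fin 3) → Fin (d a)) : ℝ) := by
    exact_mod_cast Fintype.card_pos
  have h1 : (((Fintype.card ((a : Fin 3) → Fin (d a)) : ℝ)⁻¹ : ℝ) : ℂ) •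
      (1 : MatD d) = (((Fintype.card ((a : Fin 3) → Fin (d a)) : ℝ)⁻¹ : ℝ) : ℂ) • 1 := rfl
  refine ⟨psd_smul Matrix.PosSemidef.one (inv_nonneg.mpr hcard.le), ?_, ?_⟩
  · rw [Matrix.trace_smul, Matrix.trace_one]
    rw [smul_eq_mul]
    push_cast
    rw [inv_mul_cancel₀]
    exact_mod_cast hcard.ne'
  · rw [ptrans_smul, ptrans_one]
    exact psd_smul Matrix.PosSemidef.one (inv_nonneg.mpr hcard.le)

lemma Uset_compact (i : Fin 3) : IsCompact (Uset d i) := by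
  refine (isCompact_box 1).of_isClosed_subset ?_ ?_
  · refine isClosed_psd.inter ((isClosed_eq continuous_mtrace continuous_const).inter ?_)
    exact isClosed_psd.preimage continuous_ptrans
  · rintro X ⟨hX, hXt, -⟩ i j
    have := psd_entry_le_trace hX i j
    rw [hXt] at this
    simpa using this

lemma Uset_herm {i : Fin 3} {σ : MatD d} (hσ : σ ∈ Uset d i) : σ.IsHermitian :=
  hσ.1.isHermitian

lemma Uset_subset_Sset (hne : Nonempty ((a : Fin 3) → Fin (d a))) (i : Fin 3) :
    Uset d i ⊆ Sset d := by
  intro σ hσ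
  classical
  refine ⟨⟨fun j => if j = i then (1:ℝ) else 0,
    fun j => if j = i then σ else (((Fintype.card ((a : Fin 3) → Fin (d a)) : ℝ)⁻¹ : ℝ) : ℂ) • 1⟩,
    ⟨⟨fun j => by by_cases hj : j = i <;> simp [hj], by simp⟩, fun j _ => ?_⟩, ?_⟩
  · by_cases hj : j = i
    · simpa [hj] using hσ
    · simpa [hj] using maxmix_mem_Uset hne j
  · show (∑ j : Fin 3, _ • _) = σ
    dsimp only
    rw [Finset.sum_eq_single i]
    · simp
    · intro j _ hj
      simp [hj]
    · simp

lemma Sset_compact : IsCompact (Sset d) := by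
  refine IsCompact.image ((isCompact_stdSimplex _ _).prod
    (isCompact_univ_pi fun i => Uset_compact i)) ?_
  refine continuous_finset_sum _ fun i _ => Continuous.fun_smul ?_ ?_
  · exact Complex.continuous_ofReal.comp ((continuous_apply i).comp continuous_fst)
  · exact (continuous_apply i).comp continuous_snd

lemma Sset_convex : Convex ℝ (Sset d) := by
  classical
  rintro x ⟨⟨p, σf⟩, ⟨⟨hp0, hp1⟩, hpi⟩, rfl⟩ y ⟨⟨q, τf⟩, ⟨⟨hq0, hq1⟩, hqi⟩, rfl⟩ a b ha hb hab
  simp only [Set.mem_pi, Set.mem_univ, forall_true_left] at hpi hqi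
  set r : Fin 3 → ℝ := fun i => a * p i + b * q i with hr
  have hr0 : ∀ i, 0 ≤ r i := fun i =>
    add_nonneg (mul_nonneg ha (hp0 i)) (mul_nonneg hb (hq0 i))
  set μ : Fin 3 → MatD d := fun i => if h : r i = 0 then σf i else
    ((a * p i / r i : ℝ) : ℂ) • σf i + ((b * q i / r i : ℝ) : ℂ) • τf i with hμ
  refine ⟨⟨r, μ⟩, ⟨⟨hr0, ?_⟩, fun i _ => ?_⟩, ?_⟩
  · rw [hr]
    rw [Finset.sum_add_distrib, ← Finset.mul_sum, ← Finset.mul_sum, hp1, hq1]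
    simpa using hab
  · by_cases h : r i = 0
    · have := hpi i
      simp only [hμ, h, dif_pos]
      exact this
    · have hrpos : 0 < r i := lt_of_le_of_ne (hr0 i) (Ne.symm h)
      have hs : 0 ≤ a * p i / r i := div_nonneg (mul_nonneg ha (hp0 i)) hrpos.le
      have ht : 0 ≤ b * q i / r i := div_nonneg (mul_nonneg hb (hq0 i)) hrpos.le
      have hst : a * p i / r i + b * q i / r i = 1 := by
        field_simp
        rfl
      obtain ⟨hσp, hσt, hσpt⟩ := hpi i
      obtain ⟨hτp, hτt, hτpt⟩ := hqi i
      simp only [hμ, h, dif_neg, not_false_iff]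
      refine ⟨(psd_smul hσp hs).add (psd_smul hτp ht), ?_, ?_⟩
      · rw [Matrix.trace_add, Matrix.trace_smul, Matrix.trace_smul, hσt, hτt,
          smul_eq_mul, smul_eq_mul, mul_one, mul_one]
        exact_mod_cast hst
      · rw [ptrans_add, ptrans_smul, ptrans_smul]
        exact (psd_smul hσpt hs).add (psd_smul hτpt ht)
  · show ∑ i, (r i : ℂ) • μ i = a • (∑ i, (p i : ℂ) • σf i) + b • (∑ i, (q i : ℂ) • τf i)
    rw [real_smul_mat, real_smul_mat, Finset.smul_sum, Finset.smul_sum,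
      ← Finset.sum_add_distrib]
    refine Finset.sum_congr rfl fun i _ => ?_
    rw [smul_smul, smul_smul]
    by_cases h : r i = 0
    · have hap : a * p i = 0 := by
        have h1 := mul_nonneg ha (hp0 i)
        have h2 := mul_nonneg hb (hq0 i)
        have : a * p i + b * q i = 0 := h
        linarith
      have hbq : b * q i = 0 := by
        have h1 := mul_nonneg ha (hp0 i)
        have : a * p i + b * q i = 0 := h
        linarith
      have hr0c : (r i : ℂ) = 0 := by exact_mod_cast h
      rw [hr0c, zero_smul]
      rw [show (a : ℂ) * (p i : ℂ) = ((a * p i : ℝ) : ℂ) by push_cast; ring,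
        show (b : ℂ) * (q i : ℂ) = ((b * q i : ℝ) : ℂ) by push_cast; ring, hap, hbq]
      simp
    · simp only [hμ, h, dif_neg, not_false_iff]
      rw [smul_add, smul_smul, smul_smul]
      congr 1
      · congr 1
        push_cast
        field_simp
        try ring
      · congr 1
        push_cast
        field_simp
        try ring
end Main

/-- any tripartite state which is not a PPT mixture is detected by some
fully decomposable witness. -/
theorem exists_fully_decomposable_witness_of_not_PPTMixture
    (d : Fin 3 → ℕ) (ρ : MatD d) (hρ : IsState ρ) (h : ¬ IsPPTMixture3 d ρ) :
    ∃ W : MatD d, W.IsHermitian ∧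
      (∀ i : Fin 3, ∃ P Q : MatD d, P.PosSemidef ∧ Q.PosSemidef ∧
        W = P + ptrans d {i} Q) ∧
      (W * ρ).trace < 0 := by
  have hne : Nonempty ((a : Fin 3) → Fin (d a)) := by
    by_contra hempty
    rw [not_nonempty_iff] at hempty
    have := hρ.2
    rw [Matrix.trace_eq_zero_of_isEmpty] at this
    exact zero_ne_one this
  -- ρ is not in the compact convex set of PPT mixtures
  have hρS : ρ ∉ Sset d := by
    intro hmem
    obtain ⟨⟨p, σf⟩, ⟨⟨hp0, hp1⟩, hpi⟩, heq⟩ := hmem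
    simp only [Set.mem_pi, Set.mem_univ, forall_true_left] at hpi
    exact h ⟨p, σf, hp0, hp1,
      fun i => ⟨⟨(hpi i).1, (hpi i).2.1⟩, (hpi i).2.2⟩, heq.symm⟩
  obtain ⟨f, u, hfS, hfρ⟩ :=
    geometric_hahn_banach_closed_point Sset_convex Sset_compact.isClosed hρS
  obtain ⟨Y, hY, hYf⟩ := exists_repr f
  set W : MatD d := (u : ℂ) • 1 - Y with hWdef
  have hW : W.IsHermitian := by
    have h1 : ((u : ℂ) • (1 : MatD d)).IsHermitian := by
      unfold Matrix.IsHermitian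
      rw [Matrix.conjTranspose_smul, Matrix.conjTranspose_one]
      congr 1
      exact Complex.conj_ofReal u
    exact h1.sub hY
  -- trace of W against any element of Uset d i is positive
  have hWU : ∀ i : Fin 3, ∀ σ ∈ Uset d i, 0 < ((W * σ).trace).re := by
    intro i σ hσ
    have hσS := Uset_subset_Sset hne i hσ
    have hfσ := hfS σ hσS
    rw [hYf σ (Uset_herm hσ)] at hfσ
    rw [hWdef, Matrix.sub_mul, Matrix.trace_sub, Matrix.smul_mul, Matrix.one_mul,
      Matrix.trace_smul, hσ.2.1]
    simp only [Complex.sub_re, smul_eq_mul, mul_one, Complex.ofReal_re]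
    linarith
  -- hence nonnegative against the PPT cones
  have hWK : ∀ i : Fin 3, ∀ X ∈ Kcone d {i}, 0 ≤ ((W * X).trace).re := by
    intro i X hX
    obtain ⟨hX1, hX2⟩ := hX
    set t : ℝ := (X.trace).re with ht
    have htn : 0 ≤ t := psd_trace_re_nonneg hX1
    rcases eq_or_lt_of_le htn with heq | hlt
    · have : X = 0 := psd_eq_zero_of_trace hX1 heq.symm
      rw [this]
      simp
    · have htc : X.trace = (t : ℂ) := herm_trace_real hX1.isHermitian
      have hσ : (((t⁻¹ : ℝ) : ℂ) • X) ∈ Uset d i := by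
        refine ⟨psd_smul hX1 (inv_nonneg.mpr htn), ?_, ?_⟩
        · rw [Matrix.trace_smul, htc, smul_eq_mul]
          push_cast
          rw [inv_mul_cancel₀]
          exact_mod_cast hlt.ne'
        · rw [ptrans_smul]
          exact psd_smul hX2 (inv_nonneg.mpr htn)
      have hpos := hWU i _ hσ
      rw [Matrix.mul_smul, Matrix.trace_smul, smul_eq_mul] at hpos
      rw [Complex.re_ofReal_mul] at hpos
      have hti : 0 < t⁻¹ := inv_pos.mpr hlt
      nlinarith [hpos, hti]
  refine ⟨W, hW, ?_, ?_⟩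
  · intro i
    exact mem_Ccone hW (hWK i)
  · have hρherm : ρ.IsHermitian := hρ.1.isHermitian
    have hfρ' : u < ((Y * ρ).trace).re := by rw [← hYf ρ hρherm]; exact hfρ
    have htr : (W * ρ).trace = ((u : ℝ) : ℂ) - (Y * ρ).trace := by
      rw [hWdef, Matrix.sub_mul, Matrix.trace_sub, Matrix.smul_mul, Matrix.one_mul,
        Matrix.trace_smul, hρ.2, smul_eq_mul, mul_one]
    have hreal : (W * ρ).trace = (((W * ρ).trace).re : ℂ) :=
      herm_trace_mul_real hW hρherm
    rw [hreal]
    have hre : ((W * ρ).trace).re < 0 := by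
      rw [htr]
      simp only [Complex.sub_re, Complex.ofReal_re]
      linarith
    exact_mod_cast hre
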